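/- Let H₁, H₂ be Hopf algebras and M ∈ LR(α₁,β₁,γ₁,δ₁), N ∈ LR(α₂,β₂,γ₂,δ₂) Yetter-Drinfeld-Long bimodules. Then the braiding c_{M,N}(m⊗n) = β₁⁻¹(m₍₋₁₎) ▷ n₍₀₎ ⊗ m₍₀₎ ◁ δ₁⁻¹(n₍₁₎), viewed as a map M ⊗ N → ᴹN ⊗ M, is right H₂-linear: c_{M,N}((m⊗n) ◁ h'') = c_{M,N}(m⊗n) ◁ h'' for all h'' ∈ H₂, where the right H₂-actions on both sides come from the tensor product structures on M ⊗ N (parameters (α₁,β₁,γ₁,δ₁)*(α₂,β₂,γ₂,δ₂)) and on ᴹN ⊗ M respectively. -/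
import Mathlib


open TensorProduct

/-- The structure maps of an `H₁`-`H₂`-bimodule-bicomodule: left `H₁`-action,
right `H₂`-action, left `H₁`-coaction and right `H₂`-coaction. -/
structure YDLStruct (k H₁ H₂ M : Type*) [Field k] [Ring H₁] [Ring H₂]
    [HopfAlgebra k H₁] [HopfAlgebra k H₂] [AddCommGroup M] [Module k M] where
  actL : H₁ ⊗[k] M →ₗ[k] M
  actR : M ⊗[k] H₂ →ₗ[k] M
  coL : M →ₗ[k] H₁ ⊗[k] M
  coR : M →ₗ[k] M ⊗[k] H₂

variable {k H₁ H₂ : Type*} [Field k] [Ring H₁] [Ring H₂]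
  [HopfAlgebra k H₁] [HopfAlgebra k H₂]

/-- `(h ⊗ m) ⊗ h' ↦ (h * h') ⊗ m`. -/
noncomputable def rmulL (k H M : Type*) [Field k] [Ring H] [HopfAlgebra k H]
    [AddCommGroup M] [Module k M] : (H ⊗[k] M) ⊗[k] H →ₗ[k] H ⊗[k] M :=
  TensorProduct.map (LinearMap.mul' k H) LinearMap.id ∘ₗ
    (TensorProduct.assoc k H H M).symm.toLinearMap ∘ₗ
    TensorProduct.map LinearMap.id (TensorProduct.comm k M H).toLinearMap ∘ₗ
    (TensorProduct.assoc k H M H).toLinearMap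

/-- `h ⊗ (m ⊗ h') ↦ m ⊗ (h * h')`. -/
noncomputable def lmulR (k H M : Type*) [Field k] [Ring H] [HopfAlgebra k H]
    [AddCommGroup M] [Module k M] : H ⊗[k] (M ⊗[k] H) →ₗ[k] M ⊗[k] H :=
  TensorProduct.map LinearMap.id (LinearMap.mul' k H) ∘ₗ
    (TensorProduct.assoc k M H H).toLinearMap ∘ₗ
    TensorProduct.map (TensorProduct.comm k H M).toLinearMap LinearMap.id ∘ₗ
    (TensorProduct.assoc k H M H).symm.toLinearMap

/-- `M` with structure maps `S` is an `(α, β, γ, δ)`-Yetter-Drinfeld-Long bimodule: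
it is an `H₁`-`H₂`-bimodule and `H₁`-`H₂`-bicomodule satisfying the four compatibility
conditions (2.1)–(2.4) (in Sweedler notation:
(2.1) `α(h₁)m₍₋₁₎ ⊗ h₂ ▷ m₍₀₎ = (h₁ ▷ m)₍₋₁₎ β(h₂) ⊗ (h₁ ▷ m)₍₀₎`;
(2.2) `(h ▷ m)₍₀₎ ⊗ (h ▷ m)₍₁₎ = h ▷ m₍₀₎ ⊗ m₍₁₎`;
(2.3) `m₍₀₎ ◁ h₁ ⊗ m₍₁₎ δ(h₂) = (m ◁ h₂)₍₀₎ ⊗ γ(h₁)(m ◁ h₂)₍₁₎`;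
(2.4) `(m ◁ h)₍₋₁₎ ⊗ (m ◁ h)₍₀₎ = m₍₋₁₎ ⊗ m₍₀₎ ◁ h`). -/
structure IsYDL (al be : H₁ →ₗ[k] H₁) (ga de : H₂ →ₗ[k] H₂)
    {M : Type*} [AddCommGroup M] [Module k M] (S : YDLStruct k H₁ H₂ M) : Prop where
  actL_one : ∀ m : M, S.actL (1 ⊗ₜ[k] m) = m
  actL_mul : ∀ (h h' : H₁) (m : M),
    S.actL ((h * h') ⊗ₜ[k] m) = S.actL (h ⊗ₜ[k] S.actL (h' ⊗ₜ[k] m))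
  actR_one : ∀ m : M, S.actR (m ⊗ₜ[k] 1) = m
  actR_mul : ∀ (m : M) (h h' : H₂),
    S.actR (S.actR (m ⊗ₜ[k] h) ⊗ₜ[k] h') = S.actR (m ⊗ₜ[k] (h * h'))
  act_bimod : ∀ (h : H₁) (m : M) (h'' : H₂),
    S.actR (S.actL (h ⊗ₜ[k] m) ⊗ₜ[k] h'') = S.actL (h ⊗ₜ[k] S.actR (m ⊗ₜ[k] h''))
  coL_counit : ∀ m : M,
    TensorProduct.lid k M (TensorProduct.map Coalgebra.counit LinearMap.id (S.coL m)) = m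
  coL_coassoc : ∀ m : M,
    TensorProduct.map Coalgebra.comul LinearMap.id (S.coL m) =
      (TensorProduct.assoc k H₁ H₁ M).symm
        (TensorProduct.map LinearMap.id S.coL (S.coL m))
  coR_counit : ∀ m : M,
    TensorProduct.rid k M (TensorProduct.map LinearMap.id Coalgebra.counit (S.coR m)) = m
  coR_coassoc : ∀ m : M,
    TensorProduct.map LinearMap.id Coalgebra.comul (S.coR m) =
      TensorProduct.assoc k M H₂ H₂
        (TensorProduct.map S.coR LinearMap.id (S.coR m))
  co_bicomod : ∀ m : M,
    TensorProduct.map LinearMap.id S.coR (S.coL m) =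
      TensorProduct.assoc k H₁ M H₂
        (TensorProduct.map S.coL LinearMap.id (S.coR m))
  ydL : ∀ (h : H₁) (m : M),
    TensorProduct.map (LinearMap.mul' k H₁ ∘ₗ TensorProduct.map al LinearMap.id) S.actL
      (TensorProduct.tensorTensorTensorComm k H₁ H₁ H₁ M
        (Coalgebra.comul (R := k) h ⊗ₜ[k] S.coL m)) =
    rmulL k H₁ M
      (TensorProduct.map (S.coL ∘ₗ S.actL ∘ₗ (TensorProduct.mk k H₁ M).flip m) be
        (Coalgebra.comul (R := k) h))
  longL : ∀ (h : H₁) (m : M),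
    S.coR (S.actL (h ⊗ₜ[k] m)) =
      TensorProduct.map (S.actL ∘ₗ TensorProduct.mk k H₁ M h) LinearMap.id (S.coR m)
  ydR : ∀ (m : M) (h : H₂),
    TensorProduct.map S.actR (LinearMap.mul' k H₂ ∘ₗ TensorProduct.map LinearMap.id de)
      (TensorProduct.tensorTensorTensorComm k M H₂ H₂ H₂
        (S.coR m ⊗ₜ[k] Coalgebra.comul (R := k) h)) =
    lmulR k H₂ M
      (TensorProduct.map ga (S.coR ∘ₗ S.actR ∘ₗ TensorProduct.mk k M H₂ m)
        (Coalgebra.comul (R := k) h))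
  longR : ∀ (m : M) (h : H₂),
    S.coL (S.actR (m ⊗ₜ[k] h)) =
      TensorProduct.map LinearMap.id (S.actR ∘ₗ (TensorProduct.mk k M H₂).flip h)
        (S.coL m)

/-- The braiding `c_{M,N}(m ⊗ n) = β₁⁻¹(m₍₋₁₎) ▷ n₍₀₎ ⊗ m₍₀₎ ◁ δ₁⁻¹(n₍₁₎)`, where
`bInv` and `dInv` are the maps `β₁⁻¹` and `δ₁⁻¹`. -/
noncomputable def braid {M N : Type*} [AddCommGroup M] [Module k M]
    [AddCommGroup N] [Module k N]
    (bInv : H₁ →ₗ[k] H₁) (dInv : H₂ →ₗ[k] H₂)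
    (SM : YDLStruct k H₁ H₂ M) (SN : YDLStruct k H₁ H₂ N) :
    M ⊗[k] N →ₗ[k] N ⊗[k] M :=
  TensorProduct.map (SN.actL ∘ₗ TensorProduct.map bInv LinearMap.id)
      (SM.actR ∘ₗ TensorProduct.map LinearMap.id dInv) ∘ₗ
    (TensorProduct.tensorTensorTensorComm k H₁ M N H₂).toLinearMap ∘ₗ
    TensorProduct.map SM.coL SN.coR

/-- The tensor product structure maps on `M ⊗ N`: here `u = α₂`, `v = α₂β₁α₂⁻¹`,
`w = γ₂`, `x = γ₂⁻¹δ₁γ₂`, so that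
`h ▷ (m⊗n) = h₁▷m ⊗ h₂▷n`, `(m⊗n)₍₋₁₎ ⊗ (m⊗n)₍₀₎ = u(m₍₋₁₎)v(n₍₋₁₎) ⊗ m₍₀₎⊗n₍₀₎`,
`(m⊗n)◁h = m◁w(h₁) ⊗ n◁x(h₂)`, `(m⊗n)₍₀₎ ⊗ (m⊗n)₍₁₎ = m₍₀₎⊗n₍₀₎ ⊗ m₍₁₎n₍₁₎`. -/
noncomputable def tensorYDL {M N : Type*} [AddCommGroup M] [Module k M]
    [AddCommGroup N] [Module k N]
    (u v : H₁ →ₗ[k] H₁) (w x : H₂ →ₗ[k] H₂)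
    (SM : YDLStruct k H₁ H₂ M) (SN : YDLStruct k H₁ H₂ N) :
    YDLStruct k H₁ H₂ (M ⊗[k] N) where
  actL := TensorProduct.map SM.actL SN.actL ∘ₗ
    (TensorProduct.tensorTensorTensorComm k H₁ H₁ M N).toLinearMap ∘ₗ
    TensorProduct.map Coalgebra.comul LinearMap.id
  actR := TensorProduct.map SM.actR SN.actR ∘ₗ
    (TensorProduct.tensorTensorTensorComm k M N H₂ H₂).toLinearMap ∘ₗ
    TensorProduct.map LinearMap.id
      (TensorProduct.map w x ∘ₗ (Coalgebra.comul : H₂ →ₗ[k] H₂ ⊗[k] H₂))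
  coL := TensorProduct.map (LinearMap.mul' k H₁ ∘ₗ TensorProduct.map u v) LinearMap.id ∘ₗ
    (TensorProduct.tensorTensorTensorComm k H₁ M H₁ N).toLinearMap ∘ₗ
    TensorProduct.map SM.coL SN.coL
  coR := TensorProduct.map LinearMap.id (LinearMap.mul' k H₂) ∘ₗ
    (TensorProduct.tensorTensorTensorComm k M H₂ N H₂).toLinearMap ∘ₗ
    TensorProduct.map SM.coR SN.coR

/-- The twisted structure on `N`: `u = β₁⁻¹α₁`, `v = α₁⁻¹α₂β₁α₂⁻¹`,
`w = γ₂⁻¹δ₁γ₂γ₁⁻¹`, `x = γ₁δ₁⁻¹`, so that `h ⇀ n = u(h) ▷ n`,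
`n ↦ v(n₍₋₁₎) ⊗ n₍₀₎`, `n ↼ h = n ◁ w(h)`, `n ↦ n₍₀₎ ⊗ x(n₍₁₎)`. -/
noncomputable def twistYDL {N : Type*} [AddCommGroup N] [Module k N]
    (u v : H₁ →ₗ[k] H₁) (w x : H₂ →ₗ[k] H₂) (SN : YDLStruct k H₁ H₂ N) :
    YDLStruct k H₁ H₂ N where
  actL := SN.actL ∘ₗ TensorProduct.map u LinearMap.id
  actR := SN.actR ∘ₗ TensorProduct.map LinearMap.id w
  coL := TensorProduct.map v LinearMap.id ∘ₗ SN.coL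
  coR := TensorProduct.map LinearMap.id x ∘ₗ SN.coR


section BraidAux

variable {k H₁ H₂ : Type*} [Field k] [Ring H₁] [Ring H₂]
  [HopfAlgebra k H₁] [HopfAlgebra k H₂]
  {M N : Type*} [AddCommGroup M] [Module k M] [AddCommGroup N] [Module k N]

theorem beq_symm_apply {H : Type*} [Ring H] [HopfAlgebra k H]
    (e : H ≃ₐc[k] H) (z : H) : e.symm (e z) = z :=
  e.toCoalgEquiv.symm_apply_apply z

theorem beq_apply_symm {H : Type*} [Ring H] [HopfAlgebra k H]
    (e : H ≃ₐc[k] H) (z : H) : e (e.symm z) = z :=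
  e.toCoalgEquiv.apply_symm_apply z

theorem comul_beq {H : Type*} [Ring H] [HopfAlgebra k H]
    (e : H ≃ₐc[k] H) (x : H) :
    Coalgebra.comul (R := k) (e x) =
      TensorProduct.map e.toLinearMap e.toLinearMap (Coalgebra.comul x) :=
  (CoalgHomClass.map_comp_comul_apply (e : H →ₐc[k] H) x).symm


theorem beq_toLinearMap_apply {k H : Type*} [Field k] [Ring H] [HopfAlgebra k H]
    (e : H ≃ₐc[k] H) (z : H) : e.toLinearMap z = e z := rfl

/-- The braiding without the initial coactions. -/
noncomputable def braidCore (bInv : H₁ →ₗ[k] H₁) (dInv : H₂ →ₗ[k] H₂)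
    (SM : YDLStruct k H₁ H₂ M) (SN : YDLStruct k H₁ H₂ N) :
    (H₁ ⊗[k] M) ⊗[k] (N ⊗[k] H₂) →ₗ[k] N ⊗[k] M :=
  TensorProduct.map (SN.actL ∘ₗ TensorProduct.map bInv LinearMap.id)
      (SM.actR ∘ₗ TensorProduct.map LinearMap.id dInv) ∘ₗ
    (TensorProduct.tensorTensorTensorComm k H₁ M N H₂).toLinearMap

theorem braid_tmul (bInv : H₁ →ₗ[k] H₁) (dInv : H₂ →ₗ[k] H₂)
    (SM : YDLStruct k H₁ H₂ M) (SN : YDLStruct k H₁ H₂ N) (m : M) (n : N) :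
    braid bInv dInv SM SN (m ⊗ₜ[k] n) =
      braidCore bInv dInv SM SN (SM.coL m ⊗ₜ[k] SN.coR n) := by
  simp [braid, braidCore]

theorem braidCore_tmul (bInv : H₁ →ₗ[k] H₁) (dInv : H₂ →ₗ[k] H₂)
    (SM : YDLStruct k H₁ H₂ M) (SN : YDLStruct k H₁ H₂ N)
    (p : H₁) (m' : M) (n' : N) (t : H₂) :
    braidCore bInv dInv SM SN ((p ⊗ₜ[k] m') ⊗ₜ[k] (n' ⊗ₜ[k] t)) =
      SN.actL (bInv p ⊗ₜ[k] n') ⊗ₜ[k] SM.actR (m' ⊗ₜ[k] dInv t) := by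
  simp [braidCore]

theorem lmulR_tmul (u : H₂) (y : N) (t : H₂) :
    lmulR k H₂ N (u ⊗ₜ[k] (y ⊗ₜ[k] t)) = y ⊗ₜ[k] (u * t) := by
  simp [lmulR]

end BraidAux
set_option maxHeartbeats 1000000 in
/-- the braiding `c_{M,N} : M ⊗ N → ᴹN ⊗ M` is right `H₂`-linear:
`c_{M,N}((m⊗n) ◁ h'') = c_{M,N}(m⊗n) ◁ h''`, where the right `H₂`-actions come from
the tensor product structures on `M ⊗ N` and on `ᴹN ⊗ M`. -/
theorem braid_right_linear {k H₁ H₂ M N : Type*} [Field k] [Ring H₁] [Ring H₂]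
    [HopfAlgebra k H₁] [HopfAlgebra k H₂]
    [AddCommGroup M] [Module k M] [AddCommGroup N] [Module k N]
    (α₁ β₁ α₂ β₂ : H₁ ≃ₐc[k] H₁) (γ₁ δ₁ γ₂ δ₂ : H₂ ≃ₐc[k] H₂)
    (SM : YDLStruct k H₁ H₂ M) (SN : YDLStruct k H₁ H₂ N)
    (hM : IsYDL α₁.toLinearMap β₁.toLinearMap γ₁.toLinearMap δ₁.toLinearMap SM)
    (hN : IsYDL α₂.toLinearMap β₂.toLinearMap γ₂.toLinearMap δ₂.toLinearMap SN) :
    braid β₁.symm.toLinearMap δ₁.symm.toLinearMap SM SN ∘ₗ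
        (tensorYDL (α₂.toLinearMap)
          (α₂.toLinearMap ∘ₗ β₁.toLinearMap ∘ₗ α₂.symm.toLinearMap)
          (γ₂.toLinearMap)
          (γ₂.symm.toLinearMap ∘ₗ δ₁.toLinearMap ∘ₗ γ₂.toLinearMap) SM SN).actR =
      (tensorYDL (α₁.toLinearMap)
          -- `α₁ ∘ (β of ᴹN) ∘ α₁⁻¹`
          (α₁.toLinearMap ∘ₗ
            (α₁.symm.toLinearMap ∘ₗ α₂.toLinearMap ∘ₗ β₁.toLinearMap ∘ₗ
              α₂.symm.toLinearMap ∘ₗ β₂.toLinearMap ∘ₗ β₁.symm.toLinearMap ∘ₗ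
              α₁.toLinearMap) ∘ₗ α₁.symm.toLinearMap)
          (γ₁.toLinearMap)
          -- `γ₁⁻¹ ∘ (δ of ᴹN) ∘ γ₁`
          (γ₁.symm.toLinearMap ∘ₗ
            (γ₁.toLinearMap ∘ₗ δ₁.symm.toLinearMap ∘ₗ δ₂.toLinearMap ∘ₗ
              γ₂.symm.toLinearMap ∘ₗ δ₁.toLinearMap ∘ₗ γ₂.toLinearMap ∘ₗ
              γ₁.symm.toLinearMap) ∘ₗ γ₁.toLinearMap)
          -- the twisted object `ᴹN`
          (twistYDL (β₁.symm.toLinearMap ∘ₗ α₁.toLinearMap)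
            (α₁.symm.toLinearMap ∘ₗ α₂.toLinearMap ∘ₗ β₁.toLinearMap ∘ₗ
              α₂.symm.toLinearMap)
            (γ₂.symm.toLinearMap ∘ₗ δ₁.toLinearMap ∘ₗ γ₂.toLinearMap ∘ₗ
              γ₁.symm.toLinearMap)
            (γ₁.toLinearMap ∘ₗ δ₁.symm.toLinearMap) SN) SM).actR ∘ₗ
      TensorProduct.map (braid β₁.symm.toLinearMap δ₁.symm.toLinearMap SM SN)
        LinearMap.id := by
  ext m n h
  simp only [TensorProduct.AlgebraTensorModule.curry_apply, TensorProduct.curry_apply,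
    LinearMap.coe_restrictScalars, LinearMap.comp_apply, TensorProduct.map_tmul,
    LinearMap.id_coe, id_eq, tensorYDL, twistYDL, LinearEquiv.coe_coe]
  have claimA : ∀ c : H₂ ⊗[k] H₂,
      (braid β₁.symm.toLinearMap δ₁.symm.toLinearMap SM SN)
        ((TensorProduct.map SM.actR SN.actR)
          ((TensorProduct.tensorTensorTensorComm k M N H₂ H₂)
            ((m ⊗ₜ[k] n) ⊗ₜ[k]
              (TensorProduct.map γ₂.toLinearMap
                (γ₂.symm.toLinearMap ∘ₗ δ₁.toLinearMap ∘ₗ γ₂.toLinearMap)) c))) =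
      braidCore β₁.symm.toLinearMap δ₁.symm.toLinearMap SM SN
        (SM.coL m ⊗ₜ[k]
          lmulR k H₂ N
            (TensorProduct.map γ₂.toLinearMap
              (SN.coR ∘ₗ SN.actR ∘ₗ TensorProduct.mk k N H₂ n)
              (TensorProduct.map
                (γ₂.symm.toLinearMap ∘ₗ δ₁.toLinearMap ∘ₗ γ₂.toLinearMap)
                (γ₂.symm.toLinearMap ∘ₗ δ₁.toLinearMap ∘ₗ γ₂.toLinearMap) c))) := by
    intro c
    induction c using TensorProduct.induction_on with
    | zero => simp
    | add x y hx hy =>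
        simp only [map_add, TensorProduct.tmul_add, hx, hy]
    | tmul a b =>
        simp only [TensorProduct.map_tmul, LinearMap.comp_apply,
          TensorProduct.tensorTensorTensorComm_tmul, TensorProduct.mk_apply,
          beq_toLinearMap_apply, beq_apply_symm]
        rw [braid_tmul, hM.longR]
        generalize SM.coL m = l
        generalize SN.coR (SN.actR (n ⊗ₜ[k] γ₂.symm (δ₁ (γ₂ b)))) = r
        induction l using TensorProduct.induction_on with
        | zero => simp
        | add x y hx hy => simp only [map_add, TensorProduct.add_tmul, hx, hy]
        | tmul p m₀ =>
          induction r using TensorProduct.induction_on with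
          | zero => simp
          | add x y hx hy => simp only [map_add, TensorProduct.tmul_add, hx, hy]
          | tmul y t =>
            simp only [TensorProduct.map_tmul, LinearMap.comp_apply, LinearMap.id_coe, id_eq,
              TensorProduct.mk_apply, LinearMap.flip_apply, lmulR_tmul, braidCore_tmul,
              beq_toLinearMap_apply]
            rw [hM.actR_mul]
            rw [map_mul δ₁.symm, beq_symm_apply]
  have claimB : ∀ (c : H₂ ⊗[k] H₂) (l : H₁ ⊗[k] M) (r : N ⊗[k] H₂),
      (TensorProduct.map
          (SN.actR ∘ₗ TensorProduct.map LinearMap.id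
            (γ₂.symm.toLinearMap ∘ₗ δ₁.toLinearMap ∘ₗ γ₂.toLinearMap ∘ₗ γ₁.symm.toLinearMap))
          SM.actR)
        ((TensorProduct.tensorTensorTensorComm k N M H₂ H₂)
          (braidCore β₁.symm.toLinearMap δ₁.symm.toLinearMap SM SN (l ⊗ₜ[k] r) ⊗ₜ[k]
            (TensorProduct.map γ₁.toLinearMap
              (γ₁.symm.toLinearMap ∘ₗ
                (γ₁.toLinearMap ∘ₗ δ₁.symm.toLinearMap ∘ₗ δ₂.toLinearMap ∘ₗ
                  γ₂.symm.toLinearMap ∘ₗ δ₁.toLinearMap ∘ₗ γ₂.toLinearMap ∘ₗ γ₁.symm.toLinearMap) ∘ₗ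
                γ₁.toLinearMap)) c)) =
      braidCore β₁.symm.toLinearMap δ₁.symm.toLinearMap SM SN
        (l ⊗ₜ[k]
          TensorProduct.map SN.actR
            (LinearMap.mul' k H₂ ∘ₗ TensorProduct.map LinearMap.id δ₂.toLinearMap)
            (TensorProduct.tensorTensorTensorComm k N H₂ H₂ H₂
              (r ⊗ₜ[k] (TensorProduct.map
                (γ₂.symm.toLinearMap ∘ₗ δ₁.toLinearMap ∘ₗ γ₂.toLinearMap)
                (γ₂.symm.toLinearMap ∘ₗ δ₁.toLinearMap ∘ₗ γ₂.toLinearMap) c)))) := by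
    intro c l r
    induction c using TensorProduct.induction_on with
    | zero => simp
    | add x y hx hy => simp only [map_add, TensorProduct.tmul_add, hx, hy]
    | tmul a b =>
      induction l using TensorProduct.induction_on with
      | zero => simp
      | add x y hx hy =>
          simp only [map_add, TensorProduct.add_tmul, TensorProduct.tmul_add, hx, hy]
      | tmul p m₀ =>
        induction r using TensorProduct.induction_on with
        | zero => simp
        | add x y hx hy =>
            simp only [map_add, TensorProduct.add_tmul, TensorProduct.tmul_add, hx, hy]
        | tmul n₀ t =>
          simp only [TensorProduct.map_tmul, LinearMap.comp_apply, LinearMap.id_coe, id_eq,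
            TensorProduct.tensorTensorTensorComm_tmul, braidCore_tmul,
            beq_toLinearMap_apply, beq_symm_apply, LinearMap.mul'_apply]
          rw [hN.act_bimod, hM.actR_mul, map_mul δ₁.symm]
  rw [claimA (Coalgebra.comul h), braid_tmul,
    claimB (Coalgebra.comul h) (SM.coL m) (SN.coR n)]
  have hc : TensorProduct.map
      (γ₂.symm.toLinearMap ∘ₗ δ₁.toLinearMap ∘ₗ γ₂.toLinearMap)
      (γ₂.symm.toLinearMap ∘ₗ δ₁.toLinearMap ∘ₗ γ₂.toLinearMap)
      (Coalgebra.comul h) = Coalgebra.comul (R := k) (γ₂.symm (δ₁ (γ₂ h))) := by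
    rw [comul_beq, comul_beq, comul_beq]
    simp only [TensorProduct.map_comp, LinearMap.comp_apply]
  rw [hc, hN.ydR n (γ₂.symm (δ₁ (γ₂ h)))]
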